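/- Let q ≥ 1 and g ≥ 1 be integers and let b₁, …, b_g be real numbers with |b_i| < 2q for all i, such that the real polynomial f(X) = ∏_{i=1}^g (X² + b_i X + q²) has integer coefficients. Let h(X) = ∏_{i=1}^g (X − (2q − b_i)), which also has integer coefficients. Then f is irreducible over ℚ if and only if h is irreducible over ℚ. -/

import Mathlib

open Polynomial
open IntermediateField

set_option maxHeartbeats 1000000
set_option synthInstance.maxHeartbeats 400000

private lemma monic_eq_of_dvd' {p q : ℚ[X]} (hp : p.Monic) (hq : q.Monic) (hdvd : p ∣ q)
    (hdeg : q.natDegree ≤ p.natDegree) : p = q :=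
  eq_of_monic_of_associated hp hq (associated_of_dvd_of_natDegree_le hdvd hq.ne_zero hdeg)

/-- With `|bᵢ| < 2q`, `f = ∏ (X² + bᵢ X + q²)` is irreducible over `ℚ`
if and only if `h = ∏ (X - (2q - bᵢ))` is irreducible over `ℚ`. -/
theorem assoc_poly_irreducible_iff (q g : ℕ) (hq : 1 ≤ q) (hg : 1 ≤ g) (b : Fin g → ℝ)
    (hb : ∀ i, |b i| < 2 * (q : ℝ))
    (F H : Polynomial ℤ)
    (hF : F.map (Int.castRingHom ℝ) =
      ∏ i : Fin g, (X ^ 2 + C (b i) * X + C ((q : ℝ) ^ 2)))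
    (hH : H.map (Int.castRingHom ℝ) =
      ∏ i : Fin g, (X - C (2 * (q : ℝ) - b i))) :
    Irreducible (F.map (Int.castRingHom ℚ)) ↔ Irreducible (H.map (Int.castRingHom ℚ)) := by
  classical
  have hinjR : Function.Injective (Int.castRingHom ℝ) := fun a b h => Int.cast_injective h
  have hinjQ : Function.Injective (Int.castRingHom ℚ) := fun a b h => Int.cast_injective h
  -- monicity of the real products
  have hfac_monic : ∀ i : Fin g, (X ^ 2 + C (b i) * X + C ((q : ℝ) ^ 2)).Monic := fun i => by
    rw [add_assoc]
    exact monic_X_pow_add (lt_of_le_of_lt degree_linear_le (by norm_num))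
  have hfac_deg : ∀ i : Fin g, (X ^ 2 + C (b i) * X + C ((q : ℝ) ^ 2)).natDegree = 2 := fun i => by
    rw [add_assoc]
    have h := degree_add_eq_left_of_degree_lt (p := (X:ℝ[X])^2) (q := C (b i) * X + C ((q:ℝ)^2))
      (by rw [degree_X_pow]; exact lt_of_le_of_lt degree_linear_le (by norm_num))
    rw [natDegree, h, degree_X_pow]; rfl
  have hfRmonic : (F.map (Int.castRingHom ℝ)).Monic := by
    rw [hF]; exact monic_prod_of_monic _ _ fun i _ => hfac_monic i
  have hhRmonic : (H.map (Int.castRingHom ℝ)).Monic := by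
    rw [hH]; exact monic_prod_of_monic _ _ fun i _ => monic_X_sub_C _
  have hFmonic : F.Monic := Polynomial.monic_of_injective hinjR hfRmonic
  have hHmonic : H.Monic := Polynomial.monic_of_injective hinjR hhRmonic
  have hFdeg : F.natDegree = 2 * g := by
    rw [← Polynomial.natDegree_map_eq_of_injective hinjR, hF,
      Polynomial.natDegree_prod _ _ (fun i _ => (hfac_monic i).ne_zero)]
    simp only [hfac_deg, Finset.sum_const, Finset.card_univ, Fintype.card_fin, smul_eq_mul]
    ring
  have hHdeg : H.natDegree = g := by
    rw [← Polynomial.natDegree_map_eq_of_injective hinjR, hH,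
      Polynomial.natDegree_prod _ _ (fun i _ => (monic_X_sub_C _).ne_zero)]
    simp only [natDegree_X_sub_C, Finset.sum_const, Finset.card_univ, Fintype.card_fin,
      smul_eq_mul, mul_one]
  set Fq := F.map (Int.castRingHom ℚ) with hFq
  set Hq := H.map (Int.castRingHom ℚ) with hHq
  have hFqmonic : Fq.Monic := hFmonic.map _
  have hHqmonic : Hq.Monic := hHmonic.map _
  have hFqdeg : Fq.natDegree = 2 * g := by
    rw [hFq, Polynomial.natDegree_map_eq_of_injective hinjQ, hFdeg]
  have hHqdeg : Hq.natDegree = g := by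
    rw [hHq, Polynomial.natDegree_map_eq_of_injective hinjQ, hHdeg]
  -- pick the distinguished index and a complex root of its quadratic factor
  set i0 : Fin g := ⟨0, hg⟩ with hi0
  set br : ℝ := b i0 with hbr
  obtain ⟨α, hα⟩ : ∃ α : ℂ, α^2 + br*α + (q:ℂ)^2 = 0 := by
    obtain ⟨z, hz⟩ := Complex.exists_root (f := X^2 + C (br:ℂ) * X + C ((q:ℂ)^2)) (by
      rw [add_assoc, degree_add_eq_left_of_degree_lt
        (by rw [degree_X_pow]; exact lt_of_le_of_lt degree_linear_le (by norm_num)), degree_X_pow]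
      norm_num)
    exact ⟨z, by simpa [IsRoot] using hz⟩
  set c : ℝ := 2*(q:ℝ) - br with hcdef
  have hα0 : α ≠ 0 := by
    rintro rfl
    simp at hα
    exact_mod_cast absurd hα (by positivity)
  have hαnotreal : ∀ r : ℝ, (r:ℂ) ≠ α := by
    intro r hr
    rw [← hr] at hα
    have h2 : r^2 + br*r + (q:ℝ)^2 = 0 := by exact_mod_cast hα
    have hb2 : br^2 < (2*(q:ℝ))^2 := by nlinarith [sq_abs br, abs_nonneg br, hb i0]
    nlinarith [sq_nonneg (2*r + br)]
  -- α is a root of Fq, c is a root of Hq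
  have hFα : aeval α Fq = 0 := by
    rw [hFq, aeval_def, eval₂_eq_eval_map, Polynomial.map_map]
    have : Polynomial.map ((algebraMap ℚ ℂ).comp (Int.castRingHom ℚ)) F
        = Polynomial.map Complex.ofRealHom (F.map (Int.castRingHom ℝ)) := by
      rw [Polynomial.map_map]; congr 1
    rw [this, hF, Polynomial.map_prod, eval_prod]
    apply Finset.prod_eq_zero (Finset.mem_univ i0)
    simpa using hα
  have hHc : aeval ((c:ℂ)) Hq = 0 := by
    rw [hHq, aeval_def, eval₂_eq_eval_map, Polynomial.map_map]
    have : Polynomial.map ((algebraMap ℚ ℂ).comp (Int.castRingHom ℚ)) H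
        = Polynomial.map Complex.ofRealHom (H.map (Int.castRingHom ℝ)) := by
      rw [Polynomial.map_map]; congr 1
    rw [this, hH, Polynomial.map_prod, eval_prod]
    apply Finset.prod_eq_zero (Finset.mem_univ i0)
    simp [hcdef, hbr]
  have hintα : IsIntegral ℚ α := ⟨Fq, hFqmonic, hFα⟩
  have hintc : IsIntegral ℚ ((c:ℂ)) := ⟨Hq, hHqmonic, hHc⟩
  -- the field K = ℚ(c)
  set K : IntermediateField ℚ ℂ := ℚ⟮(c:ℂ)⟯ with hK
  haveI : FiniteDimensional ℚ K := IntermediateField.adjoin.finiteDimensional hintc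
  -- K consists of real numbers
  have hKreal : ∀ z ∈ K, ∃ r : ℝ, (r:ℂ) = z := by
    have hle : K ≤ Subfield.toIntermediateField (K := ℚ) Complex.ofRealHom.fieldRange
        (fun x => ⟨(x:ℝ), by simp⟩) := by
      rw [hK, IntermediateField.adjoin_le_iff]
      rintro z hz
      rw [Set.mem_singleton_iff] at hz
      exact hz ▸ ⟨c, rfl⟩
    intro z hz
    exact hle hz
  have hαK : α ∉ K := fun hmem => by
    obtain ⟨r, hr⟩ := hKreal α hmem
    exact hαnotreal r hr
  -- α is quadratic over K
  have hgenK : ((c:ℂ)) ∈ K := IntermediateField.mem_adjoin_simple_self ℚ _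
  have hbrK : ((br:ℝ):ℂ) ∈ K := by
    have h2q : ((2*(q:ℝ) : ℝ):ℂ) ∈ K := by
      push_cast
      exact_mod_cast IntermediateField.natCast_mem K (2*q)
    have := sub_mem h2q hgenK
    have heq : ((2*(q:ℝ) : ℝ):ℂ) - ((c:ℝ):ℂ) = ((br:ℝ):ℂ) := by
      rw [hcdef]; push_cast; ring
    rwa [heq] at this
  set kb : K := ⟨(br:ℂ), hbrK⟩ with hkb
  have hkbval : ((kb : ℂ)) = (br:ℂ) := rfl
  set PK : Polynomial K := X^2 + C kb * X + C ((q:K)^2) with hPK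
  have hPKmonic : PK.Monic := by
    rw [hPK, add_assoc]
    exact monic_X_pow_add (lt_of_le_of_lt degree_linear_le (by norm_num))
  have hPKα : aeval α PK = 0 := by
    rw [hPK]
    have h1 : (algebraMap K ℂ) kb = (br:ℂ) := hkbval
    have h2 : (algebraMap K ℂ) ((q:K)^2) = (q:ℂ)^2 := by push_cast; ring
    simp only [map_add, map_mul, map_pow, aeval_X, aeval_C, h1, h2]
    exact hα
  have hintKα : IsIntegral K α := ⟨PK, hPKmonic, hPKα⟩
  haveI : FiniteDimensional K K⟮α⟯ := IntermediateField.adjoin.finiteDimensional hintKα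
  -- [K(α) : K] = 2
  have hdim2 : Module.finrank K K⟮α⟯ = 2 := by
    rw [IntermediateField.adjoin.finrank hintKα]
    have hle : (minpoly K α).natDegree ≤ 2 := by
      have := Polynomial.natDegree_le_of_dvd (minpoly.dvd K α hPKα) hPKmonic.ne_zero
      have hPKdeg : PK.natDegree = 2 := by
        rw [hPK, add_assoc, natDegree, degree_add_eq_left_of_degree_lt
          (by rw [degree_X_pow]; exact lt_of_le_of_lt degree_linear_le (by norm_num)),
          degree_X_pow]
        rfl
      omega
    have hge : 2 ≤ (minpoly K α).natDegree := by
      rw [minpoly.two_le_natDegree_iff hintKα]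
      rintro ⟨k, hk⟩
      exact hαK (hk ▸ k.2)
    omega
  -- ℚ(c)(α) = ℚ(α) after restricting scalars
  have hrest : (IntermediateField.restrictScalars ℚ K⟮α⟯) = ℚ⟮α⟯ := by
    rw [hK]
    erw [IntermediateField.adjoin_adjoin_left]
    apply le_antisymm
    · rw [IntermediateField.adjoin_le_iff]
      rintro z (rfl | rfl)
      · -- c ∈ ℚ(α)
        have hc : ((c : ℝ) : ℂ) = 2*(q:ℂ) + α + (q:ℂ)^2 * α⁻¹ := by
          rw [hcdef]
          push_cast
          field_simp
          linear_combination -(1:ℂ)*hα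
        rw [hc]
        have hq1 : (2*(q:ℂ)) ∈ ℚ⟮α⟯ := by
          exact_mod_cast IntermediateField.natCast_mem ℚ⟮α⟯ (2*q)
        have hq2 : ((q:ℂ)^2) ∈ ℚ⟮α⟯ := by
          exact_mod_cast IntermediateField.natCast_mem ℚ⟮α⟯ (q^2)
        exact add_mem (add_mem hq1 (IntermediateField.mem_adjoin_simple_self ℚ α))
          (mul_mem hq2 (inv_mem (IntermediateField.mem_adjoin_simple_self ℚ α)))
      · exact IntermediateField.mem_adjoin_simple_self ℚ _
    · apply IntermediateField.adjoin.mono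
      exact Set.subset_union_right
  -- key degree identity
  have hkey : (minpoly ℚ α).natDegree = (minpoly ℚ ((c:ℂ))).natDegree * 2 := by
    have t1 : Module.finrank ℚ ℚ⟮α⟯ = (minpoly ℚ α).natDegree :=
      IntermediateField.adjoin.finrank hintα
    have t2 : Module.finrank ℚ K = (minpoly ℚ ((c:ℂ))).natDegree :=
      IntermediateField.adjoin.finrank hintc
    have t3 : Module.finrank ℚ K * Module.finrank K K⟮α⟯ = Module.finrank ℚ K⟮α⟯ :=
      Module.finrank_mul_finrank ℚ K K⟮α⟯
    have t4 : Module.finrank ℚ (IntermediateField.restrictScalars ℚ K⟮α⟯)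
        = Module.finrank ℚ K⟮α⟯ := rfl
    rw [← t1, ← t2, ← hrest, t4, ← t3, hdim2]
  -- conclude
  constructor
  · intro hFirr
    have hminα : minpoly ℚ α = Fq := (minpoly.eq_of_irreducible_of_monic hFirr hFα hFqmonic).symm
    have hdegc : (minpoly ℚ ((c:ℂ))).natDegree = g := by
      have := hkey
      rw [hminα, hFqdeg] at this
      omega
    have : minpoly ℚ ((c:ℂ)) = Hq :=
      monic_eq_of_dvd' (minpoly.monic hintc) hHqmonic (minpoly.dvd ℚ _ hHc)
        (by rw [hdegc, hHqdeg])
    rw [← this]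
    exact minpoly.irreducible hintc
  · intro hHirr
    have hminc : minpoly ℚ ((c:ℂ)) = Hq := (minpoly.eq_of_irreducible_of_monic hHirr hHc hHqmonic).symm
    have hdegα : (minpoly ℚ α).natDegree = 2*g := by
      rw [hkey, hminc, hHqdeg]; ring
    have : minpoly ℚ α = Fq :=
      monic_eq_of_dvd' (minpoly.monic hintα) hFqmonic (minpoly.dvd ℚ _ hFα)
        (by rw [hdegα, hFqdeg])
    rw [← this]
    exact minpoly.irreducible hintα
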